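/- For every z with 0 ≤ z < 1, ₂F₁(1/2, 1/2; 3/2; z) = arcsin(√z)/√z (with value 1 at z=0); equivalently ∫₀¹ (1−t²z)^{-1/2} dt = arcsin(√z)/√z. -/

import Mathlib

open Real intervalIntegral

/-- Gauss hypergeometric function `₂F₁(a,b;c;z)` via the Euler integral
representation (valid for `c > b > 0`). -/
noncomputable def hyp2F1 (a b c z : ℝ) : ℝ :=
  Real.Gamma c / (Real.Gamma b * Real.Gamma (c - b)) *
    ∫ t in (0:ℝ)..1, t ^ (b - 1) * (1 - t) ^ (c - b - 1) * (1 - t * z) ^ (-a)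

open MeasureTheory Set in
lemma keyI (z : ℝ) (hz0 : 0 ≤ z) (hz1 : z < 1) :
    (∫ t in (0:ℝ)..1, (1 - t ^ 2 * z) ^ (-(1/2) : ℝ)) =
      (if z = 0 then 1 else Real.arcsin (Real.sqrt z) / Real.sqrt z) := by
  rcases eq_or_lt_of_le hz0 with h0 | h0
  · rw [if_pos h0.symm, ← h0]
    simp [Real.one_rpow]
  · rw [if_neg h0.ne']
    set sz := Real.sqrt z with hsz
    have hsz0 : 0 < sz := Real.sqrt_pos.2 h0
    have hsz1 : sz < 1 := by
      rw [hsz, show (1:ℝ) = Real.sqrt 1 by simp]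
      exact Real.sqrt_lt_sqrt hz0 hz1
    have hszsq : sz ^ 2 = z := Real.sq_sqrt hz0
    have key : ∀ t ∈ Set.uIcc (0:ℝ) 1,
        HasDerivAt (fun t => Real.arcsin (t * sz) / sz) ((1 - t^2*z) ^ (-(1/2):ℝ)) t := by
      intro t ht
      rw [Set.uIcc_of_le (by norm_num)] at ht
      obtain ⟨ht0, ht1⟩ := ht
      have ht2 : t ^ 2 ≤ 1 := by nlinarith
      have hpos : 0 < 1 - t^2*z := by nlinarith [mul_le_mul_of_nonneg_right ht2 hz0]
      have hne1 : t * sz ≠ -1 := by nlinarith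
      have hne2 : t * sz ≠ 1 := by nlinarith
      have hd := ((Real.hasDerivAt_arcsin hne1 hne2).comp t
        ((hasDerivAt_id t).mul_const sz)).div_const sz
      refine hd.congr_deriv ?_
      have h1 : (t * sz) ^ 2 = t ^ 2 * z := by rw [mul_pow, hszsq]
      rw [h1, one_mul, mul_div_assoc, div_self hsz0.ne', mul_one,
        Real.rpow_neg hpos.le, ← Real.sqrt_eq_rpow, one_div]
    have hcont : ContinuousOn (fun t : ℝ => (1 - t^2*z) ^ (-(1/2):ℝ)) (Set.uIcc 0 1) := by
      apply ContinuousOn.rpow_const (by fun_prop)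
      intro t ht
      rw [Set.uIcc_of_le (by norm_num)] at ht
      left
      have ht2 : t ^ 2 ≤ 1 := by nlinarith [ht.1, ht.2]
      nlinarith [mul_le_mul_of_nonneg_right ht2 hz0]
    rw [intervalIntegral.integral_eq_sub_of_hasDerivAt key hcont.intervalIntegrable]
    simp

open MeasureTheory Set in
theorem stmt1 (z : ℝ) (hz0 : 0 ≤ z) (hz1 : z < 1) :
    hyp2F1 (1/2) (1/2) (3/2) z =
      (if z = 0 then 1 else Real.arcsin (Real.sqrt z) / Real.sqrt z) ∧
    (∫ t in (0:ℝ)..1, (1 - t ^ 2 * z) ^ (-(1/2) : ℝ)) =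
      (if z = 0 then 1 else Real.arcsin (Real.sqrt z) / Real.sqrt z) := by
  have hkey := keyI z hz0 hz1
  refine ⟨?_, hkey⟩
  rw [← hkey]
  unfold hyp2F1
  have hG32 : Real.Gamma (3/2) = Real.sqrt π / 2 := by
    rw [show (3:ℝ)/2 = 1/2 + 1 by norm_num, Real.Gamma_add_one (by norm_num),
      Real.Gamma_one_half_eq]
    ring
  have hfac : Real.Gamma (3/2) / (Real.Gamma (1/2) * Real.Gamma ((3:ℝ)/2 - 1/2)) = 1/2 := by
    rw [hG32, Real.Gamma_one_half_eq, show (3:ℝ)/2 - 1/2 = 1 by norm_num, Real.Gamma_one]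
    have : Real.sqrt π ≠ 0 := ne_of_gt (Real.sqrt_pos.2 Real.pi_pos)
    field_simp
  -- simplify exponents
  have hexp : ∀ t : ℝ, t ^ ((1:ℝ)/2 - 1) * (1 - t) ^ ((3:ℝ)/2 - 1/2 - 1) * (1 - t * z) ^ (-(1/2):ℝ)
      = t ^ (-(1/2):ℝ) * (1 - t * z) ^ (-(1/2):ℝ) := by
    intro t
    rw [show (1:ℝ)/2 - 1 = -(1/2) by norm_num, show (3:ℝ)/2 - 1/2 - 1 = 0 by norm_num,
      Real.rpow_zero, mul_one]
  have hinj : Set.InjOn (fun s : ℝ => s ^ 2) (Set.Ioc 0 1) := by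
    intro a ha b hb h
    simp only at h
    nlinarith [ha.1, hb.1]
  have himg : (fun s : ℝ => s ^ 2) '' Set.Ioc 0 1 = Set.Ioc (0:ℝ) 1 := by
    ext x
    constructor
    · rintro ⟨s, hs, rfl⟩
      constructor <;> simp only <;> nlinarith [hs.1, hs.2]
    · rintro ⟨hx0, hx1⟩
      exact ⟨Real.sqrt x, ⟨Real.sqrt_pos.2 hx0, Real.sqrt_le_one.mpr hx1⟩, Real.sq_sqrt hx0.le⟩
  have hsub := MeasureTheory.integral_image_eq_integral_abs_deriv_smul measurableSet_Ioc
    (f' := fun s : ℝ => 2 * s)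
    (fun s _ => by simpa using (hasDerivAt_pow 2 s).hasDerivWithinAt) hinj
    (fun t => t ^ (-(1/2):ℝ) * (1 - t * z) ^ (-(1/2):ℝ))
  rw [himg] at hsub
  have hcongr : ∫ s in Set.Ioc (0:ℝ) 1,
      |2 * s| • ((fun t => t ^ (-(1/2):ℝ) * (1 - t * z) ^ (-(1/2):ℝ)) (s ^ 2))
      = ∫ s in Set.Ioc (0:ℝ) 1, 2 * (1 - s ^ 2 * z) ^ (-(1/2):ℝ) := by
    apply MeasureTheory.setIntegral_congr_fun measurableSet_Ioc
    intro s hs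
    have hs0 : 0 < s := hs.1
    simp only [smul_eq_mul]
    rw [abs_of_pos (by positivity)]
    have : (s ^ 2 : ℝ) ^ (-(1/2):ℝ) = s⁻¹ := by
      rw [Real.rpow_neg (by positivity), ← Real.sqrt_eq_rpow, Real.sqrt_sq hs0.le]
    rw [this]
    field_simp
  calc Real.Gamma (3/2) / (Real.Gamma (1/2) * Real.Gamma (3/2 - 1/2)) *
      ∫ t in (0:ℝ)..1, t ^ ((1:ℝ)/2 - 1) * (1 - t) ^ ((3:ℝ)/2 - 1/2 - 1) * (1 - t * z) ^ (-(1/2):ℝ)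
      = 1/2 * ∫ t in Set.Ioc (0:ℝ) 1, t ^ (-(1/2):ℝ) * (1 - t * z) ^ (-(1/2):ℝ) := by
        rw [hfac, intervalIntegral.integral_of_le (by norm_num)]
        congr 1
        · exact MeasureTheory.setIntegral_congr_fun measurableSet_Ioc fun t _ => hexp t
    _ = 1/2 * ∫ s in Set.Ioc (0:ℝ) 1, 2 * (1 - s ^ 2 * z) ^ (-(1/2):ℝ) := by
        rw [hsub, hcongr]
    _ = ∫ t in (0:ℝ)..1, (1 - t ^ 2 * z) ^ (-(1/2):ℝ) := by
        rw [intervalIntegral.integral_of_le (by norm_num), MeasureTheory.integral_const_mul]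
        ring
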